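/- If a locally connected metric continuum X is not a local dendrite, then for every ε > 0 there exists a simple closed curve S ⊆ X with diameter less than ε; in fact X contains a sequence of simple closed curves whose diameters converge to 0. -/

import Mathlib

/-- A space has the fixed point property: every continuous self-map has a fixed point. -/
def HasFPP (Y : Type*) [TopologicalSpace Y] : Prop :=
  ∀ f : Y → Y, Continuous f → ∃ x, f x = x

/-- A space has the periodic point property: every continuous self-map has a periodic point. -/
def HasPPP (Y : Type*) [TopologicalSpace Y] : Prop :=
  ∀ f : Y → Y, Continuous f → ∃ x, ∃ n : ℕ, 1 ≤ n ∧ f^[n] x = x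

/-- Local fixed point property: there is an open basis whose members have closures with FPP. -/
def HasLFPP (Y : Type*) [TopologicalSpace Y] : Prop :=
  ∃ 𝓑 : Set (Set Y), TopologicalSpace.IsTopologicalBasis 𝓑 ∧
    ∀ B ∈ 𝓑, HasFPP ↥(closure B)

/-- Weak local fixed point property. -/
def HasWLFPP (Y : Type*) [TopologicalSpace Y] : Prop :=
  ∃ 𝓑 : Set (Set Y), TopologicalSpace.IsTopologicalBasis 𝓑 ∧
    ∀ B ∈ 𝓑, ∀ f : Y → Y, Continuous f → f '' closure B ⊆ B → ∃ x ∈ B, f x = x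

/-- Local periodic point property. -/
def HasLPPP (Y : Type*) [TopologicalSpace Y] : Prop :=
  ∃ 𝓑 : Set (Set Y), TopologicalSpace.IsTopologicalBasis 𝓑 ∧
    ∀ B ∈ 𝓑, HasPPP ↥(closure B)

/-- Weak local periodic point property. -/
def HasWLPPP (Y : Type*) [TopologicalSpace Y] : Prop :=
  ∃ 𝓑 : Set (Set Y), TopologicalSpace.IsTopologicalBasis 𝓑 ∧
    ∀ B ∈ 𝓑, ∀ f : Y → Y, Continuous f → f '' closure B ⊆ B →
      ∃ x ∈ B, ∃ n : ℕ, 1 ≤ n ∧ f^[n] x = x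

/-- A subset is a simple closed curve if it is homeomorphic to the unit circle. -/
def IsSimpleClosedCurve {α : Type*} [TopologicalSpace α] (S : Set α) : Prop :=
  Nonempty (↥S ≃ₜ ↥(Metric.sphere (0 : EuclideanSpace ℝ (Fin 2)) 1))

/-- Covering dimension at most `n`: every finite open cover admits an open shrinking
of order at most `n + 1`. -/
def CoveringDimLE (Y : Type*) [TopologicalSpace Y] (n : ℕ) : Prop :=
  ∀ (ι : Type) [Finite ι] (U : ι → Set Y), (∀ i, IsOpen (U i)) → (⋃ i, U i) = Set.univ →
    ∃ V : ι → Set Y, (∀ i, IsOpen (V i)) ∧ (∀ i, V i ⊆ U i) ∧ (⋃ i, V i) = Set.univ ∧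
      ∀ y : Y, {i | y ∈ V i}.ncard ≤ n + 1

/-- A dendrite: a locally connected (metric) continuum containing no simple closed curve. -/
def IsDendrite {α : Type*} [TopologicalSpace α] (D : Set α) : Prop :=
  IsCompact D ∧ IsConnected D ∧ LocallyConnectedSpace ↥D ∧ ∀ S ⊆ D, ¬ IsSimpleClosedCurve S

/-- A local dendrite: every point has a closed neighborhood which is a dendrite. -/
def IsLocalDendrite (Y : Type*) [TopologicalSpace Y] : Prop :=
  ∀ y : Y, ∃ N : Set Y, N ∈ nhds y ∧ IsClosed N ∧ IsDendrite N


section Auxiliary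
set_option linter.unusedSectionVars false
set_option linter.deprecated false
open Metric Set Filter Topology

/-- A set admitting finite closed covers by small bounded preconnected pieces at every scale
is locally connected as a subspace. -/
lemma locallyConnected_of_propS {X : Type*} [MetricSpace X] {N : Set X}
    (hS : ∀ δ : ℝ, 0 < δ → ∃ F : Set (Set X), F.Finite ∧
      (∀ P ∈ F, IsClosed P ∧ IsPreconnected P ∧ P ⊆ N ∧ Bornology.IsBounded P ∧
        Metric.diam P ≤ δ) ∧ N ⊆ ⋃₀ F) :
    LocallyConnectedSpace ↥N := by
  rw [locallyConnectedSpace_iff_connected_subsets]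
  rintro ⟨y, hyN⟩ U hU
  obtain ⟨δ, hδ, hball⟩ := Metric.mem_nhds_iff.mp hU
  obtain ⟨F, hfin, hP, hcov⟩ := hS (δ/2) (by linarith)
  set M : Set X := ⋃₀ {P ∈ F | y ∈ P} with hM
  set G : Set X := ⋃₀ {P ∈ F | y ∉ P} with hG
  have hGclosed : IsClosed G := by
    rw [hG, sUnion_eq_biUnion]
    exact (hfin.subset (sep_subset _ _)).isClosed_biUnion (fun P hPm => (hP P hPm.1).1)
  have hyG : y ∉ G := by
    rintro ⟨P, ⟨hPm, hyP⟩, hyP'⟩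
    exact hyP hyP'
  have hMN : M ⊆ N := by
    rintro z ⟨P, ⟨hPm, _⟩, hzP⟩
    exact (hP P hPm).2.2.1 hzP
  have hMconn : IsPreconnected M :=
    isPreconnected_sUnion y _ (fun P hPm => hPm.2) (fun P hPm => (hP P hPm.1).2.1)
  have hsub : N ∩ Gᶜ ⊆ M := by
    rintro z ⟨hzN, hzG⟩
    obtain ⟨P, hPm, hzP⟩ := hcov hzN
    by_cases hyP : y ∈ P
    · exact ⟨P, ⟨hPm, hyP⟩, hzP⟩
    · exact absurd ⟨P, ⟨hPm, hyP⟩, hzP⟩ hzG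
  have hMball : M ⊆ ball y δ := by
    rintro z ⟨P, ⟨hPm, hyP⟩, hzP⟩
    have := Metric.dist_le_diam_of_mem (hP P hPm).2.2.2.1 hzP hyP
    have := (hP P hPm).2.2.2.2
    exact mem_ball.2 (by linarith)
  refine ⟨Subtype.val ⁻¹' M, ?_, ?_, ?_⟩
  · rw [nhds_subtype_eq_comap]
    refine Filter.mem_comap.2 ⟨Gᶜ, hGclosed.isOpen_compl.mem_nhds hyG, ?_⟩
    rintro ⟨z, hzN⟩ hz
    exact hsub ⟨hzN, hz⟩
  · rw [← Topology.IsInducing.isPreconnected_image Topology.IsInducing.subtypeVal]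
    have : Subtype.val '' (Subtype.val ⁻¹' M : Set ↥N) = M := by
      rw [Subtype.image_preimage_coe]
      exact inter_eq_self_of_subset_right hMN
    rwa [this]
  · rintro ⟨z, hzN⟩ hz
    apply hball
    have : dist z y < δ := hMball hz
    exact mem_ball.2 (by rwa [Subtype.dist_eq])

section
variable {X : Type*} [MetricSpace X] [CompactSpace X] [LocallyConnectedSpace X]

lemma bounded_all (s : Set X) : Bornology.IsBounded s :=
  isCompact_univ.isBounded.subset (subset_univ s)

lemma small_cover (r : ℝ) (hr : 0 < r) :
    ∃ 𝒜 : Set (Set X), 𝒜.Finite ∧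
      (∀ A ∈ 𝒜, IsOpen A ∧ IsPreconnected A ∧ Metric.diam A ≤ r) ∧
      ∀ z : X, ∃ A ∈ 𝒜, z ∈ A := by
  have hV : ∀ z : X, ∃ V : Set X, V ⊆ ball z (r/2) ∧ IsOpen V ∧ z ∈ V ∧ IsConnected V := by
    intro z
    exact locallyConnectedSpace_iff_subsets_isOpen_isConnected.mp ‹_› z _
      (ball_mem_nhds z (by linarith))
  choose V hVb hVo hVz hVc using hV
  obtain ⟨t, ht⟩ := IsCompact.elim_finite_subcover isCompact_univ V hVo
    (fun z _ => mem_iUnion.2 ⟨z, hVz z⟩)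
  refine ⟨V '' ↑t, (t.finite_toSet.image V), ?_, ?_⟩
  · rintro A ⟨z, _, rfl⟩
    refine ⟨hVo z, (hVc z).isPreconnected, ?_⟩
    calc Metric.diam (V z) ≤ Metric.diam (ball z (r/2)) :=
          Metric.diam_mono (hVb z) Metric.isBounded_ball
      _ ≤ 2 * (r/2) := Metric.diam_ball (by linarith)
      _ = r := by ring
  · intro z
    have := ht (mem_univ z)
    simp only [mem_iUnion] at this
    obtain ⟨w, hw, hz⟩ := this
    exact ⟨V w, ⟨w, hw, rfl⟩, hz⟩

lemma small_peano_nbhd (x : X) (ε : ℝ) (hε : 0 < ε) :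
    ∃ N : Set X, N ∈ nhds x ∧ IsClosed N ∧ IsCompact N ∧ IsConnected N ∧
      (∀ δ : ℝ, 0 < δ → ∃ F : Set (Set X), F.Finite ∧
        (∀ P ∈ F, IsClosed P ∧ IsPreconnected P ∧ P ⊆ N ∧ Bornology.IsBounded P ∧
          Metric.diam P ≤ δ) ∧ N ⊆ ⋃₀ F) ∧
      Metric.diam N ≤ ε := by
  set c : ℝ := ε/8 with hc
  have hcpos : 0 < c := by positivity
  set r : ℕ → ℝ := fun k => c * (1/2)^k with hrdef
  have hrpos : ∀ k, 0 < r k := fun k => by positivity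
  have hA := fun k => small_cover (X := X) (r k) (hrpos k)
  choose 𝒜 hAfin hAprop hAcov using hA
  -- the layers
  set D : ℕ → Set (Set X) := fun k => Nat.rec (motive := fun _ => Set (Set X))
      {A ∈ 𝒜 0 | x ∈ closure A}
      (fun k Dk => {A ∈ 𝒜 (k+1) | (closure A ∩ closure (⋃₀ Dk)).Nonempty}) k with hDdef
  have hD0 : D 0 = {A ∈ 𝒜 0 | x ∈ closure A} := rfl
  have hDsucc : ∀ k, D (k+1)
      = {A ∈ 𝒜 (k+1) | (closure A ∩ closure (⋃₀ D k)).Nonempty} := fun k => rfl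
  set W : ℕ → Set X := fun k => ⋃₀ D k with hWdef
  have hDsub : ∀ k, D k ⊆ 𝒜 k := by
    intro k; cases k with
    | zero => rw [hD0]; exact sep_subset _ _
    | succ k => rw [hDsucc]; exact sep_subset _ _
  have hDfin : ∀ k, (D k).Finite := fun k => (hAfin k).subset (hDsub k)
  have hDne : ∀ k, ∀ A ∈ D k, A.Nonempty := by
    intro k A hAm; cases k with
    | zero => exact closure_nonempty_iff.mp ⟨x, hAm.2⟩
    | succ k =>
      obtain ⟨p, hp, -⟩ := hAm.2
      exact closure_nonempty_iff.mp ⟨p, hp⟩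
  have hx0 : x ∈ W 0 := by
    obtain ⟨A, hAm, hxA⟩ := hAcov 0 x
    exact ⟨A, ⟨hAm, subset_closure hxA⟩, hxA⟩
  have hstep : ∀ k, closure (W k) ⊆ W (k+1) := by
    intro k z hz
    obtain ⟨A, hAm, hzA⟩ := hAcov (k+1) z
    exact ⟨A, ⟨hAm, ⟨z, subset_closure hzA, hz⟩⟩, hzA⟩
  have hmono : Monotone W :=
    monotone_nat_of_le_succ (fun k => subset_closure.trans (hstep k))
  have hxW : ∀ k, x ∈ W k := fun k => hmono (Nat.zero_le k) hx0
  -- preconnectedness of layers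
  have hWconn : ∀ k, IsPreconnected (W k) := by
    intro k; induction k with
    | zero =>
      have heq : W 0 = ⋃₀ {S | ∃ A ∈ D 0, S = A ∪ {x}} := by
        ext z; constructor
        · rintro ⟨A, hAm, hzA⟩
          exact ⟨A ∪ {x}, ⟨A, hAm, rfl⟩, Or.inl hzA⟩
        · rintro ⟨S, ⟨A, hAm, rfl⟩, (h | h)⟩
          · exact ⟨A, hAm, h⟩
          · rw [mem_singleton_iff] at h; rw [h]; exact hx0
      rw [heq]
      apply isPreconnected_sUnion x
      · rintro S ⟨A, hAm, rfl⟩; exact Or.inr rfl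
      · rintro S ⟨A, hAm, rfl⟩
        have hApc : IsPreconnected A := (hAprop 0 A (hDsub 0 hAm)).2.1
        exact hApc.subset_closure subset_union_left
          (union_subset subset_closure (by simpa using hAm.2))
    | succ k ih =>
      have hclW : IsPreconnected (closure (W k)) := ih.closure
      have heq : W (k+1) = ⋃₀ {S | ∃ A ∈ D (k+1), S = A ∪ closure (W k)} ∪ closure (W k) := by
        ext z; constructor
        · rintro ⟨A, hAm, hz⟩
          exact Or.inl ⟨A ∪ closure (W k), ⟨A, hAm, rfl⟩, Or.inl hz⟩
        · rintro (⟨S, ⟨A, hAm, rfl⟩, (h | h)⟩ | h)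
          · exact ⟨A, hAm, h⟩
          · exact hstep k h
          · exact hstep k h
      rw [heq]
      refine IsPreconnected.union x ?_ (subset_closure (hxW k)) ?_ hclW
      · obtain ⟨A, hAm, hxA⟩ := hAcov (k+1) x
        have hAD : A ∈ D (k+1) := ⟨hAm, ⟨x, subset_closure hxA, subset_closure (hxW k)⟩⟩
        exact ⟨A ∪ closure (W k), ⟨A, hAD, rfl⟩, Or.inl hxA⟩
      · apply isPreconnected_sUnion x
        · rintro S ⟨A, hAm, rfl⟩; exact Or.inr (subset_closure (hxW k))
        · rintro S ⟨A, hAm, rfl⟩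
          obtain ⟨p, hpA, hpW⟩ := hAm.2
          have hApc : IsPreconnected A := (hAprop (k+1) A (hDsub (k+1) hAm)).2.1
          have h1 : IsPreconnected (A ∪ {p}) :=
            hApc.subset_closure subset_union_left
              (union_subset subset_closure (by simpa using hpA))
          have := IsPreconnected.union p (Or.inr rfl) hpW h1 hclW
          have heq2 : A ∪ {p} ∪ closure (W k) = A ∪ closure (W k) := by
            rw [union_assoc]
            congr 1
            exact union_eq_self_of_subset_left (by simpa using hpW)
          rwa [heq2] at this
  -- distance bound for layers
  have hWball : ∀ k, W k ⊆ closedBall x (2*c - c*(1/2)^k) := by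
    intro k; induction k with
    | zero =>
      rintro z ⟨A, hAm, hzA⟩
      have hd : dist z x ≤ Metric.diam A := by
        have := Metric.diam_closure (s := A)
        have hdc := Metric.dist_le_diam_of_mem (bounded_all (closure A))
          (subset_closure hzA) hAm.2
        rwa [Metric.diam_closure] at hdc
      have : dist z x ≤ r 0 := hd.trans (hAprop 0 A (hDsub 0 hAm)).2.2
      rw [mem_closedBall]
      have : dist z x ≤ c := by simpa [hrdef] using this
      linarith [pow_nonneg (by norm_num : (0:ℝ) ≤ 1/2) 0,
        (by norm_num : ((1:ℝ)/2)^0 = 1)]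
    | succ k ih =>
      rintro z ⟨A, hAm, hzA⟩
      obtain ⟨p, hpA, hpW⟩ := hAm.2
      have hd1 : dist z p ≤ r (k+1) := by
        have hdc := Metric.dist_le_diam_of_mem (bounded_all (closure A))
          (subset_closure hzA) hpA
        rw [Metric.diam_closure] at hdc
        exact hdc.trans (hAprop (k+1) A (hDsub (k+1) hAm)).2.2
      have hd2 : dist p x ≤ 2*c - c*(1/2)^k := by
        have : closure (W k) ⊆ closedBall x (2*c - c*(1/2)^k) :=
          closure_minimal ih Metric.isClosed_closedBall
        exact this hpW
      rw [mem_closedBall]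
      have h3 : dist z x ≤ dist z p + dist p x := dist_triangle z p x
      have hr1 : r (k+1) = c * (1/2)^(k+1) := rfl
      have : (1/2:ℝ)^(k+1) = (1/2) * (1/2)^k := by ring
      nlinarith [pow_nonneg (by norm_num : (0:ℝ) ≤ 1/2) k]
  have hWball' : ∀ k, W k ⊆ closedBall x (2*c) := by
    intro k
    refine (hWball k).trans (Metric.closedBall_subset_closedBall ?_)
    have : 0 < c*(1/2)^k := by positivity
    linarith
  -- the neighborhood
  set U : Set X := ⋃ k, W k with hUdef
  set N : Set X := closure U with hNdef
  have hUN : U ⊆ N := subset_closure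
  have hWU : ∀ k, W k ⊆ U := fun k => subset_iUnion W k
  have hxU : x ∈ U := hWU 0 hx0
  have hNnhds : N ∈ nhds x := by
    obtain ⟨A, hAm, hxA⟩ := hAcov 1 x
    have hAD : A ∈ D 1 := ⟨hAm, ⟨x, subset_closure hxA, subset_closure hx0⟩⟩
    exact mem_nhds_iff.2 ⟨A, (fun z hz => hUN (hWU 1 ⟨A, hAD, hz⟩)),
      (hAprop 1 A hAm).1, hxA⟩
  have hNclosed : IsClosed N := isClosed_closure
  have hNcompact : IsCompact N := hNclosed.isCompact
  have hUconn : IsPreconnected U := by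
    rw [hUdef, ← sUnion_range]
    apply isPreconnected_sUnion x
    · rintro S ⟨k, rfl⟩; exact hxW k
    · rintro S ⟨k, rfl⟩; exact hWconn k
  have hNconn : IsConnected N := ⟨⟨x, hUN hxU⟩, hUconn.closure⟩
  have hNball : N ⊆ closedBall x (2*c) :=
    closure_minimal (iUnion_subset hWball') Metric.isClosed_closedBall
  have hNdiam : Metric.diam N ≤ ε := by
    have h1 : Metric.diam N ≤ 2*(2*c) :=
      le_trans (Metric.diam_mono hNball (bounded_all _)) (Metric.diam_closedBall (by positivity))
    rw [hc] at h1; linarith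
  -- property S
  refine ⟨N, hNnhds, hNclosed, hNcompact, hNconn, ?_, hNdiam⟩
  intro δ hδ
  obtain ⟨K, hK⟩ := exists_pow_lt_of_lt_one (x := δ/(3*c)) (y := (1/2:ℝ))
    (by positivity) (by norm_num)
  have hK3 : 3*c*(1/2)^K ≤ δ := by
    have h2 : 0 < 3*c := by positivity
    rw [lt_div_iff₀ h2] at hK
    nlinarith [pow_nonneg (by norm_num : (0:ℝ) ≤ 1/2) K]
  -- the descendant sets
  set E : Set X → ℕ → Set X := fun B m => Nat.rec (motive := fun _ => Set X)
    (closure B)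
    (fun m Em => Em ∪ ⋃ A ∈ {A ∈ D (K+m+1) | (closure A ∩ Em).Nonempty}, closure A) m
    with hEdef
  have hE0 : ∀ B, E B 0 = closure B := fun B => rfl
  have hEsucc : ∀ B m, E B (m+1)
      = E B m ∪ ⋃ A ∈ {A ∈ D (K+m+1) | (closure A ∩ E B m).Nonempty}, closure A :=
    fun B m => rfl
  have hEclosed : ∀ B m, IsClosed (E B m) := by
    intro B m; induction m with
    | zero => exact isClosed_closure
    | succ m ih =>
      rw [hEsucc]
      exact ih.union (((hDfin (K+m+1)).subset (sep_subset _ _)).isClosed_biUnion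
        (fun A _ => isClosed_closure))
  have hEbase : ∀ B m, closure B ⊆ E B m := by
    intro B m; induction m with
    | zero => exact subset_rfl
    | succ m ih => rw [hEsucc]; exact ih.trans subset_union_left
  have hEconn : ∀ B ∈ D K, ∀ m, IsPreconnected (E B m) := by
    intro B hBm m
    obtain ⟨b₀, hb₀⟩ := hDne K B hBm
    have hb₀' : ∀ m, b₀ ∈ E B m := fun m => hEbase B m (subset_closure hb₀)
    induction m with
    | zero => exact ((hAprop K B (hDsub K hBm)).2.1).closure
    | succ m ih =>
      rw [hEsucc]
      have heq : E B m ∪ ⋃ A ∈ {A ∈ D (K+m+1) | (closure A ∩ E B m).Nonempty}, closure A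
          = ⋃₀ ({E B m} ∪ {S | ∃ A ∈ D (K+m+1), (closure A ∩ E B m).Nonempty
              ∧ S = closure A ∪ E B m}) := by
        ext z; constructor
        · rintro (h | h)
          · exact ⟨E B m, Or.inl rfl, h⟩
          · simp only [mem_iUnion, mem_setOf_eq] at h
            obtain ⟨A, ⟨hAD, hne⟩, hz⟩ := h
            exact ⟨closure A ∪ E B m, Or.inr ⟨A, hAD, hne, rfl⟩, Or.inl hz⟩
        · rintro ⟨S, (rfl | ⟨A, hAD, hne, rfl⟩), hz⟩
          · exact Or.inl hz
          · rcases hz with h | h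
            · refine Or.inr ?_
              simp only [mem_iUnion, mem_setOf_eq]
              exact ⟨A, ⟨hAD, hne⟩, h⟩
            · exact Or.inl h
      rw [heq]
      apply isPreconnected_sUnion b₀
      · rintro S (rfl | ⟨A, hAD, hne, rfl⟩)
        · exact hb₀' m
        · exact Or.inr (hb₀' m)
      · rintro S (rfl | ⟨A, hAD, hne, rfl⟩)
        · exact ih
        · obtain ⟨p, hpA, hpE⟩ := hne
          exact IsPreconnected.union p hpA hpE
            ((hAprop (K+m+1) A (hDsub (K+m+1) hAD)).2.1).closure ih
  have hEdist : ∀ B m, ∀ z ∈ E B m, ∃ p ∈ closure B,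
      dist z p ≤ c*(1/2)^K - c*(1/2)^(K+m) := by
    intro B m; induction m with
    | zero =>
      intro z hz
      exact ⟨z, hz, by simp⟩
    | succ m ih =>
      intro z hz
      rw [hEsucc] at hz
      show ∃ p ∈ closure B, dist z p ≤ c*(1/2)^K - c*(1/2)^(K+m+1)
      have hpow : c*(1/2:ℝ)^(K+m+1) = 1/2*(c*(1/2)^(K+m)) := by ring
      rcases hz with h | h
      · obtain ⟨p, hp, hd⟩ := ih z h
        refine ⟨p, hp, hd.trans ?_⟩
        have h1 : (0:ℝ) ≤ c*(1/2)^(K+m) := by positivity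
        linarith
      · simp only [mem_iUnion, mem_setOf_eq] at h
        obtain ⟨A, ⟨hAD, ⟨q, hqA, hqE⟩⟩, hzA⟩ := h
        obtain ⟨p, hp, hd⟩ := ih q hqE
        refine ⟨p, hp, ?_⟩
        have hd1 : dist z q ≤ r (K+m+1) := by
          have hdc := Metric.dist_le_diam_of_mem (bounded_all (closure A)) hzA hqA
          rw [Metric.diam_closure] at hdc
          exact hdc.trans (hAprop (K+m+1) A (hDsub (K+m+1) hAD)).2.2
        have h3 : dist z p ≤ dist z q + dist q p := dist_triangle z q p
        have hr1 : r (K+m+1) = c * (1/2)^(K+m+1) := rfl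
        rw [hr1] at hd1
        linarith
  have hEsubU : ∀ B ∈ D K, ∀ m, E B m ⊆ U := by
    intro B hBm m; induction m with
    | zero =>
      rw [hE0]
      intro z hz
      have : z ∈ closure (W K) :=
        closure_mono (show B ⊆ W K from fun w hw => mem_sUnion.mpr ⟨B, hBm, hw⟩) hz
      exact hWU (K+1) (hstep K this)
    | succ m ih =>
      rw [hEsucc]
      apply union_subset ih
      intro z hz
      simp only [mem_iUnion, mem_setOf_eq] at hz
      obtain ⟨A, ⟨hAD, -⟩, hzA⟩ := hz
      have : z ∈ closure (W (K+m+1)) :=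
        closure_mono (show A ⊆ W (K+m+1) from fun w hw => mem_sUnion.mpr ⟨A, hAD, hw⟩) hzA
      exact hWU (K+m+2) (hstep (K+m+1) this)
  have hcoverE : ∀ m, W (K+m) ⊆ ⋃ B ∈ D K, E B m := by
    intro m; induction m with
    | zero =>
      rintro z ⟨B, hBm, hzB⟩
      exact mem_biUnion hBm (hEbase B 0 (subset_closure hzB))
    | succ m ih =>
      rintro z ⟨A, hAD, hzA⟩
      have hAD' : A ∈ D (K+m+1) := hAD
      obtain ⟨p, hpA, hpW⟩ := hAD'.2
      have hclosedT : IsClosed (⋃ B ∈ D K, E B m) :=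
        (hDfin K).isClosed_biUnion (fun B _ => hEclosed B m)
      have hpT : p ∈ ⋃ B ∈ D K, E B m :=
        closure_minimal ih hclosedT hpW
      simp only [mem_iUnion] at hpT
      obtain ⟨B, hBm, hpE⟩ := hpT
      have : closure A ⊆ E B (m+1) := by
        rw [hEsucc]
        intro w hw
        refine Or.inr ?_
        simp only [mem_iUnion, mem_setOf_eq]
        exact ⟨A, ⟨hAD, ⟨p, hpA, hpE⟩⟩, hw⟩
      exact mem_biUnion hBm (this (subset_closure hzA))
  -- assemble the pieces
  refine ⟨(fun B => N ∩ closure (⋃ m, E B m)) '' (D K), (hDfin K).image _, ?_, ?_⟩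
  · rintro P ⟨B, hBm, rfl⟩
    have hSconn : IsPreconnected (⋃ m, E B m) := by
      obtain ⟨b₀, hb₀⟩ := hDne K B hBm
      rw [← sUnion_range]
      apply isPreconnected_sUnion b₀
      · rintro S ⟨m, rfl⟩; exact hEbase B m (subset_closure hb₀)
      · rintro S ⟨m, rfl⟩; exact hEconn B hBm m
    have hSN : (⋃ m, E B m) ⊆ N := fun z hz => by
      obtain ⟨m, hm⟩ := mem_iUnion.mp hz
      exact hUN (hEsubU B hBm m hm)
    refine ⟨hNclosed.inter isClosed_closure, ?_, inter_subset_left,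
      (bounded_all _), ?_⟩
    · apply hSconn.subset_closure
      · exact subset_inter hSN subset_closure
      · exact inter_subset_right.trans subset_rfl
    · have hdS : Metric.diam (⋃ m, E B m) ≤ 3*c*(1/2)^K := by
        apply Metric.diam_le_of_forall_dist_le (by positivity)
        intro z hz w hw
        obtain ⟨m, hm⟩ := mem_iUnion.mp hz
        obtain ⟨m', hm'⟩ := mem_iUnion.mp hw
        obtain ⟨p, hp, hdp⟩ := hEdist B m z hm
        obtain ⟨q, hq, hdq⟩ := hEdist B m' w hm'
        have hpq : dist p q ≤ r K := by
          have hdc := Metric.dist_le_diam_of_mem (bounded_all (closure B)) hp hq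
          rw [Metric.diam_closure] at hdc
          exact hdc.trans (hAprop K B (hDsub K hBm)).2.2
        have ht : dist z w ≤ dist z p + dist p q + dist q w := dist_triangle4 z p q w
        have hrK : r K = c*(1/2)^K := rfl
        have h1 : (0:ℝ) ≤ c*(1/2)^(K+m) := by positivity
        have h2 : (0:ℝ) ≤ c*(1/2)^(K+m') := by positivity
        rw [hrK] at hpq
        rw [dist_comm q w] at ht
        linarith
      calc Metric.diam (N ∩ closure (⋃ m, E B m))
          ≤ Metric.diam (closure (⋃ m, E B m)) :=
            Metric.diam_mono inter_subset_right (bounded_all _)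
        _ = Metric.diam (⋃ m, E B m) := Metric.diam_closure _
        _ ≤ 3*c*(1/2)^K := hdS
        _ ≤ δ := hK3
  · -- covering
    have hUsub : U ⊆ ⋃ B ∈ D K, closure (⋃ m, E B m) := by
      rintro z hz
      obtain ⟨k, hk⟩ := mem_iUnion.mp hz
      rcases le_or_gt k K with h | h
      · have : z ∈ W K := hmono h hk
        have := hcoverE 0 this
        simp only [mem_iUnion] at this ⊢
        obtain ⟨B, hBm, hE⟩ := this
        exact ⟨B, hBm, subset_closure (mem_iUnion.mpr ⟨0, hE⟩)⟩
      · obtain ⟨m, rfl⟩ : ∃ m, k = K + m := ⟨k - K, by omega⟩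
        have := hcoverE m hk
        simp only [mem_iUnion] at this ⊢
        obtain ⟨B, hBm, hE⟩ := this
        exact ⟨B, hBm, subset_closure (mem_iUnion.mpr ⟨m, hE⟩)⟩
    have hT : IsClosed (⋃ B ∈ D K, closure (⋃ m, E B m)) :=
      (hDfin K).isClosed_biUnion (fun B _ => isClosed_closure)
    intro z hz
    have : z ∈ ⋃ B ∈ D K, closure (⋃ m, E B m) := closure_minimal hUsub hT hz
    simp only [mem_iUnion] at this
    obtain ⟨B, hBm, hE⟩ := this
    exact ⟨N ∩ closure (⋃ m, E B m), ⟨B, hBm, rfl⟩, hz, hE⟩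
end

end Auxiliary

/-- A locally connected metric continuum which is not a local dendrite contains arbitrarily
small simple closed curves; in fact a sequence of simple closed curves with diameters
tending to zero. -/
theorem stmt_11 {X : Type*} [MetricSpace X] [CompactSpace X] [ConnectedSpace X] [Nonempty X]
    [LocallyConnectedSpace X] (h : ¬ IsLocalDendrite X) :
    (∀ ε > (0 : ℝ), ∃ S : Set X, IsSimpleClosedCurve S ∧ Metric.diam S < ε) ∧
      ∃ Sn : ℕ → Set X, (∀ n, IsSimpleClosedCurve (Sn n)) ∧
        Filter.Tendsto (fun n => Metric.diam (Sn n)) Filter.atTop (nhds 0) := by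
  rw [IsLocalDendrite] at h
  push_neg at h
  obtain ⟨y, hy⟩ := h
  have key : ∀ ε : ℝ, 0 < ε → ∃ S : Set X, IsSimpleClosedCurve S ∧ Metric.diam S < ε := by
    intro ε hε
    obtain ⟨N, hnhds, hclosed, hcomp, hconn, hpropS, hdiam⟩ :=
      small_peano_nbhd y (ε/2) (by linarith)
    have hlc : LocallyConnectedSpace ↥N := locallyConnected_of_propS hpropS
    have hnd := hy N hnhds hclosed
    rw [IsDendrite] at hnd
    push_neg at hnd
    obtain ⟨S, hSN, hS⟩ := hnd hcomp hconn hlc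
    refine ⟨S, hS, ?_⟩
    have hle : Metric.diam S ≤ Metric.diam N :=
      Metric.diam_mono hSN (isCompact_univ.isBounded.subset (Set.subset_univ _))
    linarith
  refine ⟨fun ε hε => key ε hε, ?_⟩
  have hseq : ∀ n : ℕ, ∃ S : Set X, IsSimpleClosedCurve S ∧ Metric.diam S < 1/((n:ℝ)+1) :=
    fun n => key _ (by positivity)
  choose Sn hSCC hdiam using hseq
  exact ⟨Sn, hSCC, squeeze_zero (fun n => Metric.diam_nonneg) (fun n => (hdiam n).le)
    tendsto_one_div_add_atTop_nhds_zero_nat⟩
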